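/- Let X be an infinite, locally finite, connected graph containing a bi-infinite geodesic (x_n)_{n∈ℤ} with d(x_m,x_n) = |m − n|, let 0 < α ≤ 1, and let x₀ = x_0. Then for every integer n ≥ 1, |S_{X_α}(x₀,n)| ≤ |S_X(x₀,n)| + 1, where S_X(x₀,n) is the set of vertices of X at distance exactly n from x₀ in X, and S_{X_α}(x₀,n) is the set of vertices of X_α at distance exactly n from x₀ in X_α. -/

import Mathlib

/-- `f` is an `(L,A)`-quasi-isometric embedding with respect to the
distance functions `dX` and `dY`. -/
def IsQIE {X Y : Type*} (dX : X → X → ℝ) (dY : Y → Y → ℝ) (L A : ℝ) (f : X → Y) : Prop :=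
  ∀ a b : X, (1 / L) * dX a b - A ≤ dY (f a) (f b) ∧ dY (f a) (f b) ≤ L * dX a b + A

/-- `f` is coarsely surjective with respect to the distance function `dY`. -/
def IsCoarselySurj {X Y : Type*} (dY : Y → Y → ℝ) (f : X → Y) : Prop :=
  ∃ C : ℝ, 0 ≤ C ∧ ∀ y : Y, ∃ x : X, dY y (f x) ≤ C

/-- The shortest-path distance of a graph, as a real-valued distance function. -/
noncomputable def gdist {V : Type*} (G : SimpleGraph V) : V → V → ℝ :=
  fun u v => (G.dist u v : ℝ)

/-- The closed ball of radius `r` about `x` in the shortest-path metric. -/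
def gball {V : Type*} (G : SimpleGraph V) (x : V) (r : ℕ) : Set V :=
  {v | G.dist x v ≤ r}

/-- `g_α(n) = ⌈(log n)^α⌉`, the length of the segment attached at `x_{n²}`. -/
noncomputable def glen (α : ℝ) (n : ℕ) : ℤ := ⌈Real.log (n : ℝ) ^ α⌉

/-- The vertex set of `X_α`: vertices of `X` together with the new segment vertices
`k_n` for `n ≥ 1` and `1 ≤ k ≤ g_α(n)`. -/
def XaV (α : ℝ) (V : Type*) : Type _ :=
  V ⊕ {p : ℕ × ℕ // 1 ≤ p.1 ∧ 1 ≤ p.2 ∧ (p.2 : ℤ) ≤ glen α p.1}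

/-- The adjacency relation of `X_α`: the adjacencies of `X`, the vertex `1_n` is
attached to `0_n = x_{n²}`, and `k_n` is adjacent to `(k+1)_n`. -/
def xaRel (α : ℝ) {V : Type*} (G : SimpleGraph V) (x : ℤ → V) :
    XaV α V → XaV α V → Prop
  | Sum.inl u, Sum.inl v => G.Adj u v
  | Sum.inl u, Sum.inr p => p.1.2 = 1 ∧ u = x ((p.1.1 : ℤ) ^ 2)
  | Sum.inr p, Sum.inl u => p.1.2 = 1 ∧ u = x ((p.1.1 : ℤ) ^ 2)
  | Sum.inr p, Sum.inr q => p.1.1 = q.1.1 ∧ (p.1.2 + 1 = q.1.2 ∨ q.1.2 + 1 = p.1.2)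

/-- The graph `X_α`, obtained from `X` by attaching, for each `n ≥ 1`, a segment of
length `g_α(n)` at the vertex `x_{n²}` of the chosen bi-infinite geodesic. -/
def Xa (α : ℝ) {V : Type*} (G : SimpleGraph V) (x : ℤ → V) : SimpleGraph (XaV α V) :=
  SimpleGraph.fromRel (xaRel α G x)

/-- The sphere of radius `r` about `x` in the shortest-path metric of `G`
(for `r ≥ 1`, it consists of the vertices at distance exactly `r` from `x`). -/
def gsphere {V : Type*} (G : SimpleGraph V) (x : V) (r : ℕ) : Set V :=
  {v | G.dist x v = r}

attribute [reducible] XaV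

section aux
variable {V : Type*} {α : ℝ} (G : SimpleGraph V) (x : ℤ → V)

/-- retraction to X -/
def xret : XaV α V → V := Sum.elim id (fun p => x ((p.1.1 : ℤ) ^ 2))

lemma xret_walk : ∀ {a b : XaV α V} (w : (Xa α G x).Walk a b),
    ∃ w' : G.Walk (xret x a) (xret x b), w'.length ≤ w.length := by
  intro a b w
  induction w with
  | nil => exact ⟨SimpleGraph.Walk.nil, le_refl _⟩
  | @cons a c b h w ih =>
    obtain ⟨w', hw'⟩ := ih
    rw [Xa, SimpleGraph.fromRel_adj] at h
    obtain ⟨hne, hrel⟩ := h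
    match a, c, hrel with
    | Sum.inl u, Sum.inl v, Or.inl hadj =>
      exact ⟨SimpleGraph.Walk.cons hadj w', Nat.succ_le_succ hw'⟩
    | Sum.inl u, Sum.inl v, Or.inr hadj =>
      exact ⟨SimpleGraph.Walk.cons hadj.symm w', Nat.succ_le_succ hw'⟩
    | Sum.inl u, Sum.inr p, Or.inl hr =>
      exact ⟨w'.copy (show xret x (Sum.inr p) = xret x (Sum.inl u) from hr.2.symm) rfl,
        by simp; omega⟩
    | Sum.inl u, Sum.inr p, Or.inr hr =>
      exact ⟨w'.copy (show xret x (Sum.inr p) = xret x (Sum.inl u) from hr.2.symm) rfl,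
        by simp; omega⟩
    | Sum.inr p, Sum.inl u, Or.inl hr =>
      exact ⟨w'.copy (show xret x (Sum.inl u) = xret x (Sum.inr p) from hr.2) rfl,
        by simp; omega⟩
    | Sum.inr p, Sum.inl u, Or.inr hr =>
      exact ⟨w'.copy (show xret x (Sum.inl u) = xret x (Sum.inr p) from hr.2) rfl,
        by simp; omega⟩
    | Sum.inr p, Sum.inr q, Or.inl hr =>
      exact ⟨w'.copy (show xret x (Sum.inr q) = xret x (Sum.inr p) by simp [xret, hr.1]) rfl,
        by simp; omega⟩
    | Sum.inr p, Sum.inr q, Or.inr hr =>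
      exact ⟨w'.copy (show xret x (Sum.inr q) = xret x (Sum.inr p) by simp [xret, hr.1]) rfl,
        by simp; omega⟩

lemma inl_adj {u v : V} (h : G.Adj u v) :
    (Xa α G x).Adj (Sum.inl u) (Sum.inl v) := by
  rw [Xa, SimpleGraph.fromRel_adj]
  exact ⟨by simp [XaV] at *; exact fun he => G.ne_of_adj h (by exact_mod_cast he), Or.inl h⟩

lemma inl_walk {u v : V} (w : G.Walk u v) :
    ∃ w' : (Xa α G x).Walk (Sum.inl u) (Sum.inl v), w'.length = w.length := by
  induction w with
  | nil => exact ⟨SimpleGraph.Walk.nil, rfl⟩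
  | cons h w ih =>
    obtain ⟨w', hw'⟩ := ih
    exact ⟨SimpleGraph.Walk.cons (inl_adj G x h) w', by simp [hw']⟩

end aux

section aux2
variable {V : Type*} {α : ℝ} (G : SimpleGraph V) (x : ℤ → V)

lemma seg_walk : ∀ (k m : ℕ) (h : 1 ≤ m ∧ 1 ≤ k ∧ ((k : ℤ) ≤ glen α m)),
    ∃ w : (Xa α G x).Walk (Sum.inr ⟨(m, k), h⟩) (Sum.inl (x ((m : ℤ) ^ 2))),
      w.length = k := by
  intro k
  induction k with
  | zero => intro m h; exact absurd h.2.1 (by omega)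
  | succ k ih =>
    intro m h
    rcases Nat.eq_zero_or_pos k with hk | hk
    · subst hk
      have hadj : (Xa α G x).Adj (Sum.inr ⟨(m, 1), h⟩) (Sum.inl (x ((m : ℤ) ^ 2))) := by
        rw [Xa, SimpleGraph.fromRel_adj]
        exact ⟨by simp [XaV], Or.inl ⟨rfl, rfl⟩⟩
      exact ⟨SimpleGraph.Walk.cons hadj SimpleGraph.Walk.nil, rfl⟩
    · have h' : 1 ≤ m ∧ 1 ≤ k ∧ ((k : ℤ) ≤ glen α m) := ⟨h.1, hk, by
        have := h.2.2; push_cast at this ⊢; omega⟩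
      obtain ⟨w, hw⟩ := ih m h'
      have hadj : (Xa α G x).Adj (Sum.inr ⟨(m, k + 1), h⟩) (Sum.inr ⟨(m, k), h'⟩) := by
        rw [Xa, SimpleGraph.fromRel_adj]
        refine ⟨?_, Or.inl ⟨rfl, Or.inr rfl⟩⟩
        simp only [XaV, ne_eq, Sum.inr.injEq, Subtype.mk.injEq, Prod.mk.injEq]
        omega
      exact ⟨SimpleGraph.Walk.cons hadj w, by simp [hw]⟩

/-- potential function -/
noncomputable def xpot (G : SimpleGraph V) (x : ℤ → V) : XaV α V → ℤ :=
  Sum.elim (fun u => (G.dist (x 0) u : ℤ)) (fun p => ((p.1.1 : ℤ)) ^ 2 + p.1.2)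

lemma dist_x_sq (hgeo : ∀ m n : ℤ, G.dist (x m) (x n) = (m - n).natAbs) (m : ℕ) :
    (G.dist (x 0) (x ((m : ℤ) ^ 2)) : ℤ) = (m : ℤ) ^ 2 := by
  rw [hgeo 0 ((m : ℤ) ^ 2)]
  push_cast
  rw [zero_sub, abs_neg, abs_of_nonneg (by positivity)]

lemma xpot_lip (hconn : G.Connected)
    (hgeo : ∀ m n : ℤ, G.dist (x m) (x n) = (m - n).natAbs)
    {a b : XaV α V} (h : (Xa α G x).Adj a b) :
    xpot G x b ≤ xpot G x a + 1 := by
  rw [Xa, SimpleGraph.fromRel_adj] at h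
  obtain ⟨hne, hrel⟩ := h
  have key : ∀ u v : V, G.Adj u v → (G.dist (x 0) v : ℤ) ≤ (G.dist (x 0) u : ℤ) + 1 := by
    intro u v huv
    have h1 : G.dist u v = 1 := SimpleGraph.dist_eq_one_iff_adj.mpr huv
    have := hconn.dist_triangle (u := x 0) (v := u) (w := v)
    have h2 : G.dist (x 0) v ≤ G.dist (x 0) u + 1 := by omega
    exact_mod_cast h2
  match a, b, hrel with
  | Sum.inl u, Sum.inl v, Or.inl hadj =>
    simpa only [xpot, Sum.elim_inl] using key u v hadj
  | Sum.inl u, Sum.inl v, Or.inr hadj =>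
    simpa only [xpot, Sum.elim_inl] using key u v hadj.symm
  | Sum.inl u, Sum.inr p, Or.inl hr =>
    simp only [xpot, Sum.elim_inl, Sum.elim_inr, hr.2, hr.1]
    rw [dist_x_sq G x hgeo]; push_cast; omega
  | Sum.inl u, Sum.inr p, Or.inr hr =>
    simp only [xpot, Sum.elim_inl, Sum.elim_inr, hr.2, hr.1]
    rw [dist_x_sq G x hgeo]; push_cast; omega
  | Sum.inr p, Sum.inl u, Or.inl hr =>
    simp only [xpot, Sum.elim_inl, Sum.elim_inr, hr.2, hr.1]
    rw [dist_x_sq G x hgeo]; push_cast; omega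
  | Sum.inr p, Sum.inl u, Or.inr hr =>
    simp only [xpot, Sum.elim_inl, Sum.elim_inr, hr.2, hr.1]
    rw [dist_x_sq G x hgeo]; push_cast; omega
  | Sum.inr p, Sum.inr q, Or.inl hr =>
    simp only [xpot, Sum.elim_inr, hr.1]
    have := hr.2; push_cast; omega
  | Sum.inr p, Sum.inr q, Or.inr hr =>
    simp only [xpot, Sum.elim_inr, hr.1]
    have := hr.2; push_cast; omega

end aux2

section aux3
variable {V : Type*} {α : ℝ} (G : SimpleGraph V) (x : ℤ → V)

lemma xpot_walk (hconn : G.Connected)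
    (hgeo : ∀ m n : ℤ, G.dist (x m) (x n) = (m - n).natAbs)
    {a b : XaV α V} (w : (Xa α G x).Walk a b) :
    xpot G x b ≤ xpot G x a + w.length := by
  induction w with
  | nil => simp
  | @cons a c b h w ih =>
    have := xpot_lip G x hconn hgeo h
    simp only [SimpleGraph.Walk.length_cons]
    push_cast
    omega

/-- distances between old vertices are unchanged -/
lemma dist_inl (hconn : G.Connected) (u v : V) :
    (Xa α G x).dist (Sum.inl u) (Sum.inl v) = G.dist u v := by
  obtain ⟨w, hw⟩ := hconn.exists_walk_length_eq_dist u v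
  obtain ⟨w', hw'⟩ := inl_walk G x w
  have hle : (Xa α G x).dist (Sum.inl u) (Sum.inl v) ≤ G.dist u v := by
    rw [← hw, ← hw']; exact SimpleGraph.dist_le w'
  have hreach : (Xa α G x).Reachable (Sum.inl u) (Sum.inl v) := ⟨w'⟩
  obtain ⟨w'', hw''⟩ := hreach.exists_walk_length_eq_dist
  obtain ⟨w3, hw3⟩ := xret_walk G x w''
  have : G.dist u v ≤ (Xa α G x).dist (Sum.inl u) (Sum.inl v) := by
    calc G.dist u v ≤ w3.length := SimpleGraph.dist_le w3
    _ ≤ w''.length := hw3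
    _ = _ := hw''
  omega

/-- distance from the basepoint to a new vertex -/
lemma dist_inr (hconn : G.Connected)
    (hgeo : ∀ m n : ℤ, G.dist (x m) (x n) = (m - n).natAbs)
    (p : {p : ℕ × ℕ // 1 ≤ p.1 ∧ 1 ≤ p.2 ∧ (p.2 : ℤ) ≤ glen α p.1}) :
    ((Xa α G x).dist (Sum.inl (x 0)) (Sum.inr p) : ℤ) = (p.1.1 : ℤ) ^ 2 + p.1.2 := by
  obtain ⟨⟨m, k⟩, hp⟩ := p
  -- upper bound walk
  obtain ⟨w1, hw1⟩ := hconn.exists_walk_length_eq_dist (x 0) (x ((m : ℤ) ^ 2))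
  obtain ⟨w1', hw1'⟩ := inl_walk G x w1
  obtain ⟨w2, hw2⟩ := seg_walk G x k m hp
  set w : (Xa α G x).Walk (Sum.inl (x 0)) (Sum.inr ⟨(m, k), hp⟩) :=
    w1'.append w2.reverse with hwdef
  have hwl : (w.length : ℤ) = (m : ℤ) ^ 2 + k := by
    have : w.length = w1'.length + w2.length := by
      simp [hwdef]
    rw [this, hw1', hw1, hw2]
    push_cast
    rw [dist_x_sq G x hgeo m]
  have hub : ((Xa α G x).dist (Sum.inl (x 0)) (Sum.inr ⟨(m, k), hp⟩) : ℤ)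
      ≤ (m : ℤ) ^ 2 + k := by
    rw [← hwl]; exact_mod_cast SimpleGraph.dist_le w
  have hreach : (Xa α G x).Reachable (Sum.inl (x 0)) (Sum.inr ⟨(m, k), hp⟩) := ⟨w⟩
  obtain ⟨w'', hw''⟩ := hreach.exists_walk_length_eq_dist
  have hlb := xpot_walk G x hconn hgeo w''
  simp only [xpot, Sum.elim_inl, Sum.elim_inr, SimpleGraph.dist_self] at hlb
  rw [hw''] at hlb
  push_cast at hlb ⊢
  omega

/-- spheres in a locally finite connected graph are finite -/
lemma sphere_fin (hlf : ∀ v : V, (G.neighborSet v).Finite) (hconn : G.Connected)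
    (x0 : V) : ∀ n : ℕ, {v : V | G.dist x0 v = n}.Finite := by
  intro n
  induction n with
  | zero =>
    apply Set.Finite.subset (Set.finite_singleton x0)
    intro v hv
    simp only [Set.mem_setOf_eq] at hv
    have := (hconn.dist_eq_zero_iff (u := x0) (v := v)).mp hv
    simp [this.symm]
  | succ n ih =>
    apply Set.Finite.subset ((ih.biUnion (fun u _ => hlf u)))
    intro v hv
    simp only [Set.mem_setOf_eq] at hv
    have hne : x0 ≠ v := by
      intro h; rw [← h, SimpleGraph.dist_self] at hv; omega
    obtain ⟨w, hw⟩ := (hconn x0 v).exists_walk_length_eq_dist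
    have hwne : ¬ w.reverse.Nil := by
      rw [SimpleGraph.Walk.nil_iff_length_eq]
      simp [hw, hv]
    obtain ⟨u, h1, w', hrec⟩ := SimpleGraph.Walk.not_nil_iff.mp hwne
    have hlen : w'.length = n := by
      have : w.reverse.length = n + 1 := by simp [hw, hv]
      rw [hrec] at this; simpa using this
    have hdu : G.dist x0 u = n := by
      have hle : G.dist x0 u ≤ n := by
        have : G.dist u x0 ≤ n := hlen ▸ SimpleGraph.dist_le w'
        rwa [SimpleGraph.dist_comm] at this
      have hge : n ≤ G.dist x0 u := by
        have := hconn.dist_triangle (u := x0) (v := u) (w := v)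
        have h1' : G.dist u v = 1 := SimpleGraph.dist_eq_one_iff_adj.mpr h1.symm
        omega
      omega
    exact Set.mem_biUnion hdu h1.symm

/-- bound on segment lengths -/
lemma glen_le (hα : 0 < α) (hα1 : α ≤ 1) (m : ℕ) (hm : 1 ≤ m) : glen α m ≤ m := by
  rw [glen, Int.ceil_le]
  push_cast
  have hlog : 0 ≤ Real.log m := Real.log_nonneg (by exact_mod_cast hm)
  rcases le_or_gt (Real.log m) 1 with h | h
  · calc Real.log m ^ α ≤ 1 := Real.rpow_le_one hlog h hα.le
    _ ≤ m := by exact_mod_cast hm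
  · calc Real.log m ^ α ≤ Real.log m ^ (1:ℝ) :=
        Real.rpow_le_rpow_of_exponent_le h.le hα1
    _ = Real.log m := Real.rpow_one _
    _ ≤ (m:ℝ) - 1 := Real.log_le_sub_one_of_pos (by positivity)
    _ ≤ m := by linarith

end aux3


/-- for every `n ≥ 1`, `|S_{X_α}(x₀,n)| ≤ |S_X(x₀,n)| + 1`,
where `x₀ = x 0`. -/
theorem stmt10 {V : Type*} (G : SimpleGraph V) [Infinite V]
    (hlf : ∀ v : V, (G.neighborSet v).Finite) (hconn : G.Connected)
    (x : ℤ → V) (hgeo : ∀ m n : ℤ, G.dist (x m) (x n) = (m - n).natAbs)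
    (α : ℝ) (hα : 0 < α) (hα1 : α ≤ 1) :
    ∀ n : ℕ, 1 ≤ n →
      (gsphere (Xa α G x) (Sum.inl (x 0)) n).ncard ≤ (gsphere G (x 0) n).ncard + 1 := by
  intro n hn
  set S : Set V := gsphere G (x 0) n with hS
  have hSfin : S.Finite := sphere_fin G hlf hconn (x 0) n
  set T : Set (XaV α V) :=
    Sum.inr '' {p : {p : ℕ × ℕ // 1 ≤ p.1 ∧ 1 ≤ p.2 ∧ (p.2 : ℤ) ≤ glen α p.1} |
      p.1.1 ^ 2 + p.1.2 = n} with hT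
  have hTsub : T.Subsingleton := by
    rintro _ ⟨p, hp, rfl⟩ _ ⟨q, hq, rfl⟩
    simp only [Set.mem_setOf_eq] at hp hq
    obtain ⟨⟨m, k⟩, hm1, hk1, hkg⟩ := p
    obtain ⟨⟨m', k'⟩, hm1', hk1', hkg'⟩ := q
    simp only at hp hq hm1 hk1 hkg hm1' hk1' hkg'
    have hk : k ≤ m := by
      have := (hkg.trans (glen_le hα hα1 m hm1)); exact_mod_cast this
    have hk' : k' ≤ m' := by
      have := (hkg'.trans (glen_le hα hα1 m' hm1')); exact_mod_cast this
    have hmm : m = m' := by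
      rcases lt_trichotomy m m' with h | h | h
      · exfalso
        have hsq : (m + 1) ^ 2 ≤ m' ^ 2 := Nat.pow_le_pow_left (by omega) 2
        have he : (m + 1) ^ 2 = m ^ 2 + 2 * m + 1 := by ring
        omega
      · exact h
      · exfalso
        have hsq : (m' + 1) ^ 2 ≤ m ^ 2 := Nat.pow_le_pow_left (by omega) 2
        have he : (m' + 1) ^ 2 = m' ^ 2 + 2 * m' + 1 := by ring
        omega
    subst hmm
    have : k = k' := by omega
    subst this
    rfl
  have hsub : gsphere (Xa α G x) (Sum.inl (x 0)) n ⊆ (Sum.inl '' S) ∪ T := by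
    rintro (u | p) hv
    · left
      refine ⟨u, ?_, rfl⟩
      have : (Xa α G x).dist (Sum.inl (x 0)) (Sum.inl u) = n := hv
      rw [dist_inl G x hconn] at this
      exact this
    · right
      refine ⟨p, ?_, rfl⟩
      have h1 : (Xa α G x).dist (Sum.inl (x 0)) (Sum.inr p) = n := hv
      have h2 := dist_inr G x hconn hgeo p
      rw [h1] at h2
      simp only [Set.mem_setOf_eq]
      push_cast at h2
      exact_mod_cast h2.symm
  have hTfin : T.Finite := hTsub.finite
  have hbig : ((Sum.inl '' S) ∪ T).Finite := (hSfin.image _).union hTfin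
  have hTcard : T.ncard ≤ 1 := by
    rcases hTsub.eq_empty_or_singleton with h | ⟨a, h⟩
    · simp [h]
    · simp [h]
  calc (gsphere (Xa α G x) (Sum.inl (x 0)) n).ncard
      ≤ ((Sum.inl '' S) ∪ T).ncard := Set.ncard_le_ncard hsub hbig
    _ ≤ (Sum.inl '' S).ncard + T.ncard := Set.ncard_union_le _ _
    _ = S.ncard + T.ncard := by rw [Set.ncard_image_of_injective _ Sum.inl_injective]
    _ ≤ S.ncard + 1 := by omega
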